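/- For all integers 1 < r < k < n, S(n,k,r) ≤ r! · T(n,k,r) + (n^r − n(n−1)⋯(n−r+1)), where S(n,k,r) is the minimum size of a covering (k−r)-insertion code over [n] and T(n,k,r) is the minimum size of a Turán (n,k,r)-system. -/

import Mathlib

open MeasureTheory Filter Topology ENNReal

/-- `x` covers `a` if `x` is a subsequence of `a`. -/
def Covers {X : Type*} {r k : ℕ} (x : Fin r → X) (a : Fin k → X) : Prop :=
  ∃ g : Fin r → Fin k, StrictMono g ∧ ∀ i, a (g i) = x i

/-- `C ⊆ X^r` is a covering `(k-r)`-insertion code over `X`: every sequence in `X^k`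
is covered by some sequence in `C`. -/
def IsCoveringCode {X : Type*} (r k : ℕ) (C : Set (Fin r → X)) : Prop :=
  ∀ a : Fin k → X, ∃ x ∈ C, Covers x a

/-- Minimum size of a covering `(k-r)`-insertion code over the alphabet `[n]`. -/
noncomputable def covNum (n k r : ℕ) : ℕ :=
  sInf {m | ∃ C : Finset (Fin r → Fin n), IsCoveringCode r k (↑C : Set (Fin r → Fin n)) ∧ C.card = m}

/-- The unit cube `[0,1]^r`. -/
def unitCube (r : ℕ) : Set (Fin r → ℝ) := {x | ∀ i, x i ∈ Set.Icc (0 : ℝ) 1}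

/-- `C ⊆ [0,1]^r` covers `[0,1]^k`. -/
def CoversCube (r k : ℕ) (C : Set (Fin r → ℝ)) : Prop :=
  ∀ a ∈ unitCube k, ∃ x ∈ C, Covers x a

/-- Delete the `i`-th coordinate of a length `r+1` sequence. -/
def deleteAt {X : Type*} {r : ℕ} (i : Fin (r + 1)) (x : Fin (r + 1) → X) : Fin r → X :=
  x ∘ i.succAbove

/-- `extSet C i` is the set `C_i` of sequences in `X^{r+1}` whose subsequence obtained by
deleting the `i`-th coordinate belongs to `C`. -/
def extSet {X : Type*} {r : ℕ} (C : Set (Fin r → X)) (i : Fin (r + 1)) :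
    Set (Fin (r + 1) → X) :=
  {x | deleteAt i x ∈ C}

/-- A set of sequences is symmetric if it is closed under permuting the coordinates. -/
def IsSymmetric {X : Type*} {k : ℕ} (M : Set (Fin k → X)) : Prop :=
  ∀ x ∈ M, ∀ σ : Equiv.Perm (Fin k), x ∘ σ ∈ M

/-- The symmetric closure of a set of sequences. -/
def SymClosure {X : Type*} {k : ℕ} (M : Set (Fin k → X)) : Set (Fin k → X) :=
  {x | ∃ σ : Equiv.Perm (Fin k), x ∘ σ ∈ M}

/-- A Turán `(n,k,r)`-system: a family of `r`-element subsets of `[n]` such that every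
`k`-element subset of `[n]` contains a member of the family. -/
def IsTuranSystem (n k r : ℕ) (F : Finset (Finset (Fin n))) : Prop :=
  (∀ A ∈ F, A.card = r) ∧ ∀ K : Finset (Fin n), K.card = k → ∃ A ∈ F, A ⊆ K

/-- Minimum size of a Turán `(n,k,r)`-system. -/
noncomputable def turanNum (n k r : ℕ) : ℕ :=
  sInf {m | ∃ F : Finset (Finset (Fin n)), IsTuranSystem n k r F ∧ F.card = m}

lemma exists_turan {n k r : ℕ} (hrk : r ≤ k) (hkn : k ≤ n) :
    ∃ F, IsTuranSystem n k r F ∧ F.card = turanNum n k r := by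
  have hne : {m | ∃ F : Finset (Finset (Fin n)), IsTuranSystem n k r F ∧ F.card = m}.Nonempty := by
    refine ⟨_, Finset.powersetCard r (Finset.univ : Finset (Fin n)), ⟨?_, ?_⟩, rfl⟩
    · intro A hA; exact (Finset.mem_powersetCard.mp hA).2
    · intro K hK
      obtain ⟨A, hA, hAc⟩ := Finset.exists_subset_card_eq (s := K) (n := r) (by omega)
      exact ⟨A, Finset.mem_powersetCard.mpr ⟨A.subset_univ, hAc⟩, hA⟩
  exact Nat.sInf_mem hne

/-- For `1 < r < k < n`,
`S(n,k,r) ≤ r! · T(n,k,r) + (n^r − n(n−1)⋯(n−r+1))`. -/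
theorem covNum_le_turanNum {n k r : ℕ} (hr : 1 < r) (hrk : r < k) (hkn : k < n) :
    covNum n k r ≤ r.factorial * turanNum n k r + (n ^ r - n.descFactorial r) := by
  classical
  obtain ⟨F, hF, hFcard⟩ := exists_turan (n := n) (k := k) (r := r) hrk.le hkn.le
  set S1 : Finset (Fin r → Fin n) :=
    Finset.univ.filter (fun x => ¬ Function.Injective x) with hS1def
  set S2 : Finset (Fin r → Fin n) :=
    Finset.univ.filter (fun x => Function.Injective x ∧ Finset.image x Finset.univ ∈ F)
    with hS2def
  set C : Finset (Fin r → Fin n) := S1 ∪ S2 with hCdef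
  -- C is a covering code
  have hcover : IsCoveringCode r k (↑C : Set (Fin r → Fin n)) := by
    intro a
    by_cases hinj : Function.Injective a
    · -- injective case: use Turán system
      have hK : (Finset.image a Finset.univ).card = k := by
        rw [Finset.card_image_of_injective _ hinj, Finset.card_univ, Fintype.card_fin]
      obtain ⟨A, hAF, hAK⟩ := hF.2 _ hK
      have hAr : A.card = r := hF.1 A hAF
      set S : Finset (Fin k) := Finset.univ.filter (fun p => a p ∈ A) with hSdef
      have himg : Finset.image a S = A := by
        apply Finset.Subset.antisymm
        · intro b hb
          obtain ⟨p, hp, rfl⟩ := Finset.mem_image.mp hb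
          exact (Finset.mem_filter.mp hp).2
        · intro b hb
          obtain ⟨p, _, rfl⟩ := Finset.mem_image.mp (hAK hb)
          exact Finset.mem_image.mpr ⟨p, Finset.mem_filter.mpr ⟨Finset.mem_univ _, hb⟩, rfl⟩
      have hScard : S.card = r := by
        rw [← hAr, ← himg, Finset.card_image_of_injective _ hinj]
      set g := S.orderEmbOfFin hScard with hgdef
      have hgrange : Finset.image (fun i => g i) Finset.univ = S := by
        ext b
        simp only [Finset.mem_image, Finset.mem_univ, true_and]
        have := Finset.range_orderEmbOfFin S hScard
        rw [Set.ext_iff] at this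
        have h2 := this b
        simp only [Set.mem_range, Finset.coe_sort_coe, Finset.mem_coe] at h2
        exact h2
      refine ⟨a ∘ g, ?_, ⟨fun i => g i, g.strictMono, fun i => rfl⟩⟩
      simp only [hCdef, Finset.coe_union, Set.mem_union]
      right
      simp only [hS2def, Finset.coe_filter, Set.mem_setOf_eq, Finset.mem_univ, true_and]
      refine ⟨hinj.comp g.injective, ?_⟩
      have : Finset.image (a ∘ (fun i => g i)) Finset.univ
          = Finset.image a (Finset.image (fun i => g i) Finset.univ) := by
        rw [Finset.image_image]
      rw [show (a ∘ ⇑g) = (a ∘ fun i => g i) from rfl, this, hgrange, himg]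
      exact hAF
    · -- non-injective case
      obtain ⟨i, j, hij, hne⟩ := Function.not_injective_iff.mp hinj
      have hijcard : ({i, j} : Finset (Fin k)).card = 2 := by
        rw [Finset.card_insert_of_notMem (by simpa using hne), Finset.card_singleton]
      obtain ⟨S, hsS, hScard⟩ := Finset.exists_superset_card_eq
        (s := ({i, j} : Finset (Fin k))) (n := r) (by omega)
        (by rw [Fintype.card_fin]; omega)
      set g := S.orderEmbOfFin hScard with hgdef
      have hmem : ∀ b ∈ S, ∃ p, g p = b := by
        intro b hb
        have := Finset.range_orderEmbOfFin S hScard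
        rw [Set.ext_iff] at this
        have h2 := this b
        simp only [Set.mem_range, Finset.coe_sort_coe, Finset.mem_coe] at h2
        exact h2.mpr hb
      obtain ⟨p, hp⟩ := hmem i (hsS (by simp))
      obtain ⟨q, hq⟩ := hmem j (hsS (by simp))
      refine ⟨a ∘ g, ?_, ⟨fun i => g i, g.strictMono, fun i => rfl⟩⟩
      simp only [hCdef, Finset.coe_union, Set.mem_union]
      left
      simp only [hS1def, Finset.coe_filter, Set.mem_setOf_eq, Finset.mem_univ, true_and]
      intro hinj'
      have hpq : p ≠ q := fun h => hne (by rw [← hp, ← hq, h])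
      exact hpq (hinj' (show a (g p) = a (g q) by rw [hp, hq, hij]))
  -- cardinality bounds
  have hS1card : S1.card = n ^ r - n.descFactorial r := by
    have htot : (Finset.univ.filter (fun x : Fin r → Fin n => Function.Injective x)).card
        + S1.card = n ^ r := by
      rw [hS1def, Finset.card_filter_add_card_filter_not, Finset.card_univ,
        Fintype.card_fun, Fintype.card_fin, Fintype.card_fin]
    have hinjcard : (Finset.univ.filter (fun x : Fin r → Fin n => Function.Injective x)).card
        = n.descFactorial r := by
      rw [← Fintype.card_subtype]
      rw [Fintype.card_congr (Equiv.subtypeInjectiveEquivEmbedding (Fin r) (Fin n))]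
      rw [Fintype.card_embedding_eq, Fintype.card_fin, Fintype.card_fin]
    omega
  have hS2card : S2.card ≤ r.factorial * F.card := by
    have hsub : S2 ⊆ F.biUnion (fun A => Finset.univ.filter
        (fun x : Fin r → Fin n => Function.Injective x ∧ Finset.image x Finset.univ = A)) := by
      intro x hx
      rw [hS2def, Finset.mem_filter] at hx
      exact Finset.mem_biUnion.mpr ⟨_, hx.2.2,
        Finset.mem_filter.mpr ⟨Finset.mem_univ _, hx.2.1, rfl⟩⟩
    calc S2.card ≤ _ := Finset.card_le_card hsub
      _ ≤ ∑ A ∈ F, (Finset.univ.filter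
          (fun x : Fin r → Fin n => Function.Injective x ∧ Finset.image x Finset.univ = A)).card :=
        Finset.card_biUnion_le
      _ ≤ ∑ _A ∈ F, r.factorial := by
        apply Finset.sum_le_sum
        intro A hA
        have hAr : A.card = r := hF.1 A hA
        -- inject into embeddings Fin r ↪ A
        have hle : (Finset.univ.filter (fun x : Fin r → Fin n =>
            Function.Injective x ∧ Finset.image x Finset.univ = A)).card
            ≤ Fintype.card (Fin r ↪ ↥A) := by
          rw [← Fintype.card_subtype]
          apply Fintype.card_le_of_injective
            (fun x => ⟨fun i => ⟨x.1 i, by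
              have := Finset.mem_image_of_mem x.1 (Finset.mem_univ i)
              rwa [x.2.2] at this⟩,
              fun i j h => x.2.1 (by simpa [Subtype.ext_iff] using h)⟩)
          intro x y h
          apply Subtype.ext
          funext i
          have := congrFun (congrArg (fun (e : Fin r ↪ ↥A) => (e : Fin r → ↥A)) h) i
          exact Subtype.ext_iff.mp this
        calc _ ≤ Fintype.card (Fin r ↪ ↥A) := hle
          _ = r.factorial := by
            rw [Fintype.card_embedding_eq, Fintype.card_coe, hAr, Fintype.card_fin,
              Nat.descFactorial_self]
      _ = F.card * r.factorial := by rw [Finset.sum_const, smul_eq_mul]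
      _ = r.factorial * F.card := Nat.mul_comm _ _
  -- conclude
  have hmem : covNum n k r ≤ C.card := Nat.sInf_le ⟨C, hcover, rfl⟩
  calc covNum n k r ≤ C.card := hmem
    _ ≤ S1.card + S2.card := Finset.card_union_le _ _
    _ ≤ (n ^ r - n.descFactorial r) + r.factorial * turanNum n k r := by
        rw [hS1card]; exact Nat.add_le_add_left (hFcard ▸ hS2card) _
    _ = r.factorial * turanNum n k r + (n ^ r - n.descFactorial r) := Nat.add_comm _ _
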